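/- Let G = (V,E) be a finite simple connected graph that is S4 for monophonic convexity. Then every clique of G is shattered by the family ℋm(G) of monophonic halfspaces: for every clique K ⊆ V and every subset K' ⊆ K there exists a monophonic halfspace H of G with H ∩ K = K'. -/

import Mathlib

open SimpleGraph

variable {V : Type*}

/-- A walk is an induced (chordless) path. -/
def IsInducedPath (G : SimpleGraph V) {x y : V} (p : G.Walk x y) : Prop :=
  p.IsPath ∧ ∀ a b : V, a ∈ p.support → b ∈ p.support → G.Adj a b → s(a, b) ∈ p.edges

/-- The monophonic interval between `u` and `v`: all vertices on some induced
path between `u` and `v` (empty if `u = v`). -/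
def mInterval (G : SimpleGraph V) (u v : V) : Set V :=
  {z | u ≠ v ∧ ∃ p : G.Walk u v, IsInducedPath G p ∧ z ∈ p.support}

/-- Monophonic convexity. -/
def MConvex (G : SimpleGraph V) (C : Set V) : Prop :=
  ∀ x ∈ C, ∀ y ∈ C, mInterval G x y ⊆ C

/-- Monophonic halfspace. -/
def IsMHalfspace (G : SimpleGraph V) (H : Set V) : Prop :=
  MConvex G H ∧ MConvex G Hᶜ

/-- The monophonic shadow `u/v`. -/
def mShadow (G : SimpleGraph V) (u v : V) : Set V :=
  {z | u ∈ mInterval G z v}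

/-- The border `Γ(X)`: vertices of `X` with a neighbour outside `X`. -/
def border (G : SimpleGraph V) (X : Set V) : Set V :=
  {x | x ∈ X ∧ ∃ y, y ∉ X ∧ G.Adj x y}

/-- `△⁻uv = N(u) ∩ N(v)`. -/
def triMinus (G : SimpleGraph V) (u v : V) : Set V :=
  G.neighborSet u ∩ G.neighborSet v

/-- `△uv = (N(u) ∩ N(v)) ∪ {u, v}`. -/
def triangleSet (G : SimpleGraph V) (u v : V) : Set V :=
  (G.neighborSet u ∩ G.neighborSet v) ∪ {u, v}

/-- `□uv`: vertices appearing in some 4-cycle of `G` having `{u,v}` as an edge. -/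
def squareSet (G : SimpleGraph V) (u v : V) : Set V :=
  {x | ∃ a b : V, G.Adj v a ∧ G.Adj a b ∧ G.Adj b u ∧
    a ≠ u ∧ a ≠ v ∧ b ≠ u ∧ b ≠ v ∧ a ≠ b ∧ (x = u ∨ x = v ∨ x = a ∨ x = b)}

/-- `A = □uv \ △⁻uv`. -/
def setA (G : SimpleGraph V) (u v : V) : Set V :=
  squareSet G u v \ triMinus G u v

/-- `Aᵘ = {x ∈ A : d(x,u) < d(x,v)}`. -/
noncomputable def setAu (G : SimpleGraph V) (u v : V) : Set V :=
  {x ∈ setA G u v | G.dist x u < G.dist x v}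

/-- `Aᵛ = A \ Aᵘ`. -/
noncomputable def setAv (G : SimpleGraph V) (u v : V) : Set V :=
  setA G u v \ setAu G u v

/-- The graph obtained from `G` by deleting all edges of the induced subgraph `G[S]`. -/
def delInduced (G : SimpleGraph V) (S : Set V) : SimpleGraph V where
  Adj a b := G.Adj a b ∧ ¬(a ∈ S ∧ b ∈ S)
  symm := by
    refine ⟨fun a b h => ?_⟩
    exact ⟨h.1.symm, fun hc => h.2 ⟨hc.2, hc.1⟩⟩
  loopless := ⟨fun a h => G.ne_of_adj h.1 rfl⟩

/-- The graph `T = G \ E(G[□uv ∪ △⁻uv])`. -/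
def graphT (G : SimpleGraph V) (u v : V) : SimpleGraph V :=
  delInduced G (squareSet G u v ∪ triMinus G u v)

/-- The monophonic convex hull of `X`. -/
def mHull (G : SimpleGraph V) (X : Set V) : Set V :=
  ⋂₀ {C | MConvex G C ∧ X ⊆ C}

/-- `S` is an `(a,b)`-separator: every walk from `a` to `b` meets `S`. -/
def IsSeparator (G : SimpleGraph V) (S : Set V) (a b : V) : Prop :=
  ∀ p : G.Walk a b, ∃ s ∈ S, s ∈ p.support

/-- The cutset `δ(X)` as a set of edges. -/
def cutset (G : SimpleGraph V) (X : Set V) : Set (Sym2 V) :=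
  {e | e ∈ G.edgeSet ∧ ∃ a b : V, e = s(a, b) ∧ a ∈ X ∧ b ∉ X}

/-- A family of sets `ℋ` shatters a set `S`. -/
def Shatters (ℋ : Set (Set V)) (S : Set V) : Prop :=
  ∀ T ⊆ S, ∃ H ∈ ℋ, H ∩ S = T

/-- `G` is `S₄` for monophonic convexity: disjoint m-convex sets are
halfspace separable. -/
def IsS4 (G : SimpleGraph V) : Prop :=
  ∀ C₁ C₂ : Set V, MConvex G C₁ → MConvex G C₂ → Disjoint C₁ C₂ →
    ∃ H : Set V, IsMHalfspace G H ∧ C₁ ⊆ H ∧ C₂ ⊆ Hᶜ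

lemma path_support_of_edge {V : Type*} {G : SimpleGraph V} {x y : V} (p : G.Walk x y)
    (hp : p.IsPath) (he : s(x,y) ∈ p.edges) : ∀ z ∈ p.support, z = x ∨ z = y := by
  cases p with
  | nil => simp at he
  | @cons _ w _ h q =>
    rw [Walk.edges_cons, List.mem_cons] at he
    rcases he with he | he
    · rw [Sym2.eq_iff] at he
      rcases he with ⟨-, hw⟩ | ⟨hw, -⟩
      · subst hw
        have : q = Walk.nil := Walk.isPath_iff_eq_nil.mp hp.of_cons
        subst this
        simp
      · exact absurd hw h.ne
    · exact absurd (Walk.fst_mem_support_of_mem_edges q he) ((Walk.cons_isPath_iff h q).mp hp).2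


lemma mconvex_of_subset_clique {V : Type*} {G : SimpleGraph V} {K C : Set V}
    (hK : G.IsClique K) (hC : C ⊆ K) : MConvex G C := by
  intro x hx y hy z hz
  obtain ⟨hxy, p, hip, hzp⟩ := hz
  have hadj : G.Adj x y := hK (hC hx) (hC hy) hxy
  have he : s(x,y) ∈ p.edges :=
    hip.2 x y (Walk.start_mem_support p) (Walk.end_mem_support p) hadj
  rcases path_support_of_edge p hip.1 he z hzp with rfl | rfl <;> assumption

/-- if `G` is `S₄` for monophonic convexity, then every clique of
`G` is shattered by the monophonic halfspaces. -/
theorem cliques_shattered_of_S4 [Fintype V] (G : SimpleGraph V) (hG : G.Connected)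
    (hS4 : IsS4 G) :
    ∀ K : Set V, G.IsClique K → ∀ K' ⊆ K,
      ∃ H : Set V, IsMHalfspace G H ∧ H ∩ K = K' := by
  intro K hK K' hK'
  obtain ⟨H, hH, h1, h2⟩ := hS4 K' (K \ K')
    (mconvex_of_subset_clique hK hK')
    (mconvex_of_subset_clique hK Set.diff_subset)
    Set.disjoint_sdiff_right
  refine ⟨H, hH, ?_⟩
  ext t
  constructor
  · rintro ⟨htH, htK⟩
    by_contra ht
    exact h2 ⟨htK, ht⟩ htH
  · exact fun ht => ⟨h1 ht, hK' ht⟩
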